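/- For every integer E with E ≡ 2 (mod 4) and E ≥ 6, |√2 - √2_E| < 2√2/E. -/

import Mathlib

/-- The truncated Catalan product
`√2_E = (2²/(1·3))·(6²/(5·7))···((E-4)²/((E-5)(E-3)))·(E/(E-1))` for `E ≡ 2 (mod 4)`. -/
noncomputable def catalanTrunc (E : ℕ) : ℝ :=
  (∏ k ∈ Finset.range ((E - 2) / 4),
    (4 * (k : ℝ) + 2) ^ 2 / ((4 * k + 1) * (4 * k + 3))) * ((E : ℝ) / (E - 1))

open Filter Real Finset Topology

noncomputable def catP (n : ℕ) : ℝ :=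
  ∏ k ∈ Finset.range n, (4 * (k : ℝ) + 2) ^ 2 / ((4 * k + 1) * (4 * k + 3))

noncomputable def catC (n : ℕ) : ℝ := catP n * ((4 * (n : ℝ) + 2) / (4 * n + 1))

lemma catP_pos (n : ℕ) : 0 < catP n := by
  apply Finset.prod_pos
  intro k _
  positivity

lemma catC_pos (n : ℕ) : 0 < catC n := by
  unfold catC
  have := catP_pos n
  positivity

lemma catC_succ (n : ℕ) :
    catC (n + 1) = catC n * ((4 * (n:ℝ) + 2) * (4 * n + 6) / ((4 * n + 3) * (4 * n + 5))) := by
  unfold catC catP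
  rw [Finset.prod_range_succ]
  push_cast
  have h1 : (4 * (n:ℝ) + 1) ≠ 0 := by positivity
  have h3 : (4 * (n:ℝ) + 3) ≠ 0 := by positivity
  have h5 : (4 * (n:ℝ) + 5) ≠ 0 := by positivity
  field_simp
  ring

lemma catC_anti : Antitone catC := by
  apply antitone_nat_of_succ_le
  intro n
  rw [catC_succ]
  have hc := catC_pos n
  have hB : (0:ℝ) < (4 * n + 3) * (4 * n + 5) := by positivity
  have hA : (4 * (n:ℝ) + 2) * (4 * n + 6) ≤ (4 * n + 3) * (4 * n + 5) := by nlinarith [Nat.cast_nonneg (α := ℝ) n]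
  exact mul_le_of_le_one_right hc.le ((div_le_one hB).mpr hA)

noncomputable def catD (n : ℕ) : ℝ := catC n * ((2 * (n : ℝ) + 1) / (2 * n + 2))

lemma catD_lt_succ (n : ℕ) : catD n < catD (n + 1) := by
  have hc := catC_pos n
  have hn : (0:ℝ) ≤ n := Nat.cast_nonneg n
  unfold catD
  rw [catC_succ]
  push_cast
  have key : ((2 * (n:ℝ) + 1) / (2 * n + 2)) <
      (4 * (n:ℝ) + 2) * (4 * n + 6) / ((4 * n + 3) * (4 * n + 5)) * ((2 * (n+1 : ℝ) + 1) / (2 * (n+1) + 2)) := by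
    rw [div_mul_div_comm, div_lt_div_iff₀ (by positivity) (by positivity)]
    nlinarith [sq_nonneg ((n:ℝ)), hn]
  calc catC n * ((2 * (n:ℝ) + 1) / (2 * n + 2))
      < catC n * ((4 * (n:ℝ) + 2) * (4 * n + 6) / ((4 * n + 3) * (4 * n + 5)) * ((2 * (n+1 : ℝ) + 1) / (2 * (n+1) + 2))) :=
        (mul_lt_mul_iff_right₀ hc).mpr key
    _ = catC n * ((4 * (n:ℝ) + 2) * (4 * n + 6) / ((4 * n + 3) * (4 * n + 5))) * ((2 * (n+1 : ℝ) + 1) / (2 * (n+1) + 2)) := by ring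

lemma catD_mono : Monotone catD := monotone_nat_of_le_succ fun n => (catD_lt_succ n).le

lemma range_prod_eq (s : ℝ) (hs : 0 < s) {n : ℕ} (hn : 1 ≤ n) :
    ∏ k ∈ Finset.range n, (s + k) = (n:ℝ) ^ s * (n.factorial : ℝ) / (Real.GammaSeq s n * (s + n)) := by
  have hn0 : (0:ℝ) < n := by exact_mod_cast hn
  have hprod : 0 < ∏ j ∈ Finset.range (n + 1), (s + j) :=
    Finset.prod_pos fun j _ => by positivity
  have hGS : 0 < Real.GammaSeq s n := by
    rw [Real.GammaSeq]
    have h1 : (0:ℝ) < (n:ℝ) ^ s := Real.rpow_pos_of_pos hn0 s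
    have h2 : (0:ℝ) < ((n.factorial : ℝ) : ℝ) := by positivity
    exact div_pos (mul_pos h1 h2) hprod
  have hsn : (0:ℝ) < s + n := by positivity
  have key : Real.GammaSeq s n * ((∏ k ∈ Finset.range n, (s + k)) * (s + n)) = (n:ℝ) ^ s * (n.factorial : ℝ) := by
    rw [Real.GammaSeq, ← Finset.prod_range_succ]
    field_simp
  rw [eq_div_iff (by positivity)]
  linarith [key]

lemma catP_eq {n : ℕ} (hn : 1 ≤ n) :
    catP n = Real.GammaSeq (1/4) n * Real.GammaSeq (3/4) n / (Real.GammaSeq (1/2) n) ^ 2 *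
      ((1/4 + (n:ℝ)) / (1/2 + n) * ((3/4 + (n:ℝ)) / (1/2 + n))) := by
  have hn0 : (0:ℝ) < n := by exact_mod_cast hn
  have hterm : catP n = (∏ k ∈ Finset.range n, ((1:ℝ)/2 + k)) ^ 2 /
      ((∏ k ∈ Finset.range n, ((1:ℝ)/4 + k)) * ∏ k ∈ Finset.range n, ((3:ℝ)/4 + k)) := by
    rw [catP, ← Finset.prod_pow, ← Finset.prod_mul_distrib, ← Finset.prod_div_distrib]
    apply Finset.prod_congr rfl
    intro k _
    have h1 : ((1:ℝ)/4 + k) ≠ 0 := by positivity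
    have h3 : ((3:ℝ)/4 + k) ≠ 0 := by positivity
    have h4 : (4 * (k:ℝ) + 1) ≠ 0 := by positivity
    have h5 : (4 * (k:ℝ) + 3) ≠ 0 := by positivity
    field_simp
    ring
  have e1 := range_prod_eq (1/4) (by norm_num) hn
  have e2 := range_prod_eq (3/4) (by norm_num) hn
  have e3 := range_prod_eq (1/2) (by norm_num) hn
  rw [hterm, e1, e2, e3]
  have ha : ((n:ℝ) ^ ((1:ℝ)/2)) ^ 2 = (n:ℝ) := by
    rw [sq, ← Real.rpow_add hn0]
    norm_num
  have hbc : (n:ℝ) ^ ((1:ℝ)/4) * (n:ℝ) ^ ((3:ℝ)/4) = (n:ℝ) := by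
    rw [← Real.rpow_add hn0]
    norm_num
  have hG : ∀ s : ℝ, 0 < s → 0 < Real.GammaSeq s n := by
    intro s hs
    rw [Real.GammaSeq]
    have h1 : (0:ℝ) < (n:ℝ) ^ s := Real.rpow_pos_of_pos hn0 s
    have h2 : (0:ℝ) < ((n.factorial : ℝ) : ℝ) := by positivity
    have h3 : 0 < ∏ j ∈ Finset.range (n + 1), (s + j) :=
      Finset.prod_pos fun j _ => by positivity
    exact div_pos (mul_pos h1 h2) h3
  have hG1 := hG (1/4) (by norm_num)
  have hG2 := hG (1/2) (by norm_num)
  have hG3 := hG (3/4) (by norm_num)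
  have hF : (0:ℝ) < ((n.factorial : ℝ) : ℝ) := by positivity
  have hp1 : (0:ℝ) < 1/4 + (n:ℝ) := by positivity
  have hp2 : (0:ℝ) < 1/2 + (n:ℝ) := by positivity
  have hp3 : (0:ℝ) < 3/4 + (n:ℝ) := by positivity
  rw [div_pow, mul_pow, ha, div_mul_div_comm, mul_mul_mul_comm, hbc]
  field_simp

lemma tendsto_ratio (a b c : ℝ) (hc : 0 < c) :
    Tendsto (fun n : ℕ => (a + c * n) / (b + c * n)) atTop (𝓝 1) := by
  have hb : Tendsto (fun n : ℕ => b + c * n) atTop atTop :=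
    tendsto_atTop_add_const_left _ b
      (Tendsto.const_mul_atTop hc tendsto_natCast_atTop_atTop)
  have h0 : Tendsto (fun n : ℕ => (a - b) / (b + c * n)) atTop (𝓝 0) :=
    Tendsto.div_atTop tendsto_const_nhds hb
  have h1 : Tendsto (fun n : ℕ => 1 + (a - b) / (b + c * n)) atTop (𝓝 1) := by
    simpa using tendsto_const_nhds.add h0
  apply h1.congr'
  filter_upwards [hb.eventually_gt_atTop 0] with n hn
  field_simp
  ring

lemma gamma_value : Real.Gamma (1/4) * Real.Gamma (3/4) / (Real.Gamma (1/2)) ^ 2 = Real.sqrt 2 := by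
  have refl := Real.Gamma_mul_Gamma_one_sub (1/4)
  have h34 : (1:ℝ) - 1/4 = 3/4 := by norm_num
  rw [h34] at refl
  have hsin : Real.sin (π * (1/4)) = Real.sqrt 2 / 2 := by
    rw [show π * (1/4) = π / 4 by ring, Real.sin_pi_div_four]
  rw [hsin] at refl
  have hhalf : Real.Gamma (1/2) = Real.sqrt π := Real.Gamma_one_half_eq
  have hpi : (0:ℝ) < π := Real.pi_pos
  have hs2 : (0:ℝ) < Real.sqrt 2 := Real.sqrt_pos.mpr (by norm_num)
  have hsq : Real.sqrt 2 * Real.sqrt 2 = 2 := Real.mul_self_sqrt (by norm_num)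
  rw [refl, hhalf, sq, Real.mul_self_sqrt hpi.le]
  rw [div_div, eq_comm, eq_div_iff (by positivity)]
  field_simp
  nlinarith [hsq, hpi, hs2]

lemma tendsto_catP : Tendsto catP atTop (𝓝 (Real.sqrt 2)) := by
  have hG1 := Real.GammaSeq_tendsto_Gamma (1/4)
  have hG2 := Real.GammaSeq_tendsto_Gamma (1/2)
  have hG3 := Real.GammaSeq_tendsto_Gamma (3/4)
  have hne : (Real.Gamma (1/2)) ^ 2 ≠ 0 := by
    rw [Real.Gamma_one_half_eq]
    have := Real.pi_pos
    positivity
  have hgs : Tendsto (fun n => Real.GammaSeq (1/4) n * Real.GammaSeq (3/4) n /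
      (Real.GammaSeq (1/2) n) ^ 2) atTop
      (𝓝 (Real.Gamma (1/4) * Real.Gamma (3/4) / (Real.Gamma (1/2)) ^ 2)) :=
    (hG1.mul hG3).div (hG2.pow 2) hne
  have hr1 : Tendsto (fun n : ℕ => (1/4 + (n:ℝ)) / (1/2 + n)) atTop (𝓝 1) := by
    have := tendsto_ratio (1/4) (1/2) 1 one_pos
    apply this.congr
    intro n
    norm_num
  have hr2 : Tendsto (fun n : ℕ => (3/4 + (n:ℝ)) / (1/2 + n)) atTop (𝓝 1) := by
    have := tendsto_ratio (3/4) (1/2) 1 one_pos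
    apply this.congr
    intro n
    norm_num
  have hmain := hgs.mul (hr1.mul hr2)
  rw [gamma_value] at hmain
  norm_num at hmain
  apply hmain.congr'
  filter_upwards [eventually_ge_atTop 1] with n hn
  exact (catP_eq hn).symm

lemma tendsto_catC : Tendsto catC atTop (𝓝 (Real.sqrt 2)) := by
  have hr : Tendsto (fun n : ℕ => (4 * (n:ℝ) + 2) / (4 * n + 1)) atTop (𝓝 1) := by
    have := tendsto_ratio 2 1 4 (by norm_num)
    apply this.congr
    intro n
    ring_nf
  have := tendsto_catP.mul hr
  rw [mul_one] at this
  exact this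

lemma tendsto_catD : Tendsto catD atTop (𝓝 (Real.sqrt 2)) := by
  have hr : Tendsto (fun n : ℕ => (2 * (n:ℝ) + 1) / (2 * n + 2)) atTop (𝓝 1) := by
    have := tendsto_ratio 1 2 2 (by norm_num)
    apply this.congr
    intro n
    ring_nf
  have := tendsto_catC.mul hr
  rw [mul_one] at this
  exact this

lemma sqrt_le_catC (n : ℕ) : Real.sqrt 2 ≤ catC n :=
  le_of_tendsto tendsto_catC (eventually_atTop.2 ⟨n, fun m hm => catC_anti hm⟩)

lemma catD_lt_sqrt (n : ℕ) : catD n < Real.sqrt 2 := by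
  have h1 : catD (n + 1) ≤ Real.sqrt 2 :=
    ge_of_tendsto tendsto_catD (eventually_atTop.2 ⟨n + 1, fun m hm => catD_mono hm⟩)
  exact lt_of_lt_of_le (catD_lt_succ n) h1

theorem catalan_trunc_error (E : ℕ) (hE : E % 4 = 2) (hE6 : 6 ≤ E) :
    |Real.sqrt 2 - catalanTrunc E| < 2 * Real.sqrt 2 / E := by
  set n := E / 4 with hn
  have hEeq : E = 4 * n + 2 := by omega
  have h4 : (E - 2) / 4 = n := by omega
  have hcast : (E : ℝ) = 4 * n + 2 := by rw [hEeq]; push_cast; ring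
  have hct : catalanTrunc E = catC n := by
    rw [catalanTrunc, catC, catP, h4, hcast]
    have h1 : (4 * (n:ℝ) + 2) - 1 = 4 * n + 1 := by ring
    rw [h1]
  have h1 : Real.sqrt 2 ≤ catC n := sqrt_le_catC n
  have h2 : catD n < Real.sqrt 2 := catD_lt_sqrt n
  have hn0 : (0:ℝ) ≤ n := Nat.cast_nonneg n
  have hd : catC n * ((2 * (n:ℝ) + 1) / (2 * n + 2)) < Real.sqrt 2 := h2
  have hd' : catC n * (2 * (n:ℝ) + 1) < Real.sqrt 2 * (2 * n + 2) := by
    calc catC n * (2 * (n:ℝ) + 1) = catC n * ((2 * (n:ℝ) + 1) / (2 * n + 2)) * (2 * n + 2) := by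
          field_simp
      _ < Real.sqrt 2 * (2 * n + 2) := mul_lt_mul_of_pos_right hd (by positivity)
  rw [hct, hcast, abs_of_nonpos (by linarith), lt_div_iff₀ (by positivity)]
  nlinarith [h1, hd', Real.sqrt_pos.mpr (show (0:ℝ) < 2 by norm_num)]
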